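/- Ratio lower bound for acceptance: suppose f(x^{k+1}) ≤ f(x^k) - Ψ_k + (L/2)‖u^{k+1} - u^k‖²_∞, m_k ≥ f(x^k), Ψ_k > 0, ‖u^{k+1} - u^k‖_∞ ≤ c·Δ for constants c, Δ, L > 0, and Ψ_k ≥ (Δ/δ)Ψ_δ for constants δ > 0, Ψ_δ > 0. Then the ratio ρ := (m_k - f(x^{k+1}))/Ψ_k satisfies ρ ≥ 1 - (Lδc²/(2Ψ_δ))·Δ. In particular, ρ ≥ ϱ whenever Δ ≤ 2(1-ϱ)Ψ_δ/(Lδc²), for any ϱ ∈ (0,1). -/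

import Mathlib

/-- Ratio lower bound for acceptance: the acceptance ratio tends to `1`
as the trust-region radius shrinks. The step `d = u^{k+1} - u^k` lives in
`Fin m → ℝ` with the sup-norm. -/
theorem stmt_10 {m : ℕ} (fk fk1 mk Ψk L c Δ δ Ψδ : ℝ) (d : Fin m → ℝ)
    (hL : 0 < L) (hc : 0 < c) (hΔ : 0 < Δ) (hδ : 0 < δ) (hΨδ : 0 < Ψδ)
    (h1 : fk1 ≤ fk - Ψk + L / 2 * ‖d‖ ^ 2)
    (h2 : fk ≤ mk) (hΨk : 0 < Ψk)
    (h3 : ‖d‖ ≤ c * Δ)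
    (h4 : (Δ / δ) * Ψδ ≤ Ψk) :
    1 - (L * δ * c ^ 2 / (2 * Ψδ)) * Δ ≤ (mk - fk1) / Ψk ∧
      ∀ ϱ ∈ Set.Ioo (0 : ℝ) 1,
        Δ ≤ 2 * (1 - ϱ) * Ψδ / (L * δ * c ^ 2) → ϱ ≤ (mk - fk1) / Ψk := by
  have hnd := norm_nonneg d
  have h5 : ‖d‖ ^ 2 ≤ (c * Δ) ^ 2 := by nlinarith
  have hA : (0:ℝ) ≤ L * δ * c ^ 2 / (2 * Ψδ) := by positivity
  have key : Ψk - L / 2 * ‖d‖ ^ 2 ≤ mk - fk1 := by linarith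
  have hmain : 1 - (L * δ * c ^ 2 / (2 * Ψδ)) * Δ ≤ (mk - fk1) / Ψk := by
    rw [le_div_iff₀ hΨk]
    have hAe : (L * δ * c ^ 2 / (2 * Ψδ)) * Δ * ((Δ / δ) * Ψδ) = L * c ^ 2 * Δ ^ 2 / 2 := by
      field_simp
    nlinarith [mul_le_mul_of_nonneg_left h4 (mul_nonneg hA hΔ.le)]
  refine ⟨hmain, fun ϱ hϱ hϱΔ => ?_⟩
  have hpos : (0:ℝ) < L * δ * c ^ 2 := by positivity
  have : (L * δ * c ^ 2 / (2 * Ψδ)) * Δ ≤ 1 - ϱ := by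
    rw [div_mul_eq_mul_div, div_le_iff₀ (by positivity)]
    rw [le_div_iff₀ hpos] at hϱΔ
    nlinarith
  linarith
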